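/- arXiv:0807.3573 — 2 statements merged into one kernel-verified Lean document; each statement's English description precedes it below -/
import Mathlib

section
/- Trust region optimality criterion: Let N ≥ 1, let Ĥ be a real symmetric N×N matrix, ĝ ∈ ℝ^N, F₀ ∈ ℝ, Δ > 0, and define Q̂(p) := F₀ + ĝᵀp + (1/2)pᵀĤp. A vector p* ∈ ℝ^N minimizes Q̂ over the set {p ∈ ℝ^N : ‖p‖ ≤ Δ} if and only if ‖p*‖ ≤ Δ and there exists a scalar λ* ≥ 0 such that: (1) (Ĥ + λ* I)p* = −ĝ; (2) λ*(Δ − ‖p*‖) = 0; and (3) the matrix Ĥ + λ* I is positive semidefinite. -/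
open Matrix

/-- If `a + b*t ≥ 0` for all small positive `t`, then `a ≥ 0`. -/
lemma tr_aux_pos (a b δ : ℝ) (hδ : 0 < δ) (h : ∀ t, 0 < t → t ≤ δ → 0 ≤ a + b * t) : 0 ≤ a := by
  by_contra hs
  push_neg at hs
  have hA : 0 < -a := by linarith
  set t := min δ (-a / (2 * (|b| + 1))) with ht
  have ht0 : 0 < t := lt_min hδ (div_pos hA (by positivity))
  have h1 := h t ht0 (min_le_left _ _)
  have h2 : b * t ≤ |b| * t := mul_le_mul_of_nonneg_right (le_abs_self b) ht0.le
  have h3 : t ≤ -a / (2 * (|b| + 1)) := min_le_right _ _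
  have h4 : |b| * t ≤ |b| * (-a / (2 * (|b| + 1))) :=
    mul_le_mul_of_nonneg_left h3 (abs_nonneg b)
  have h5 : |b| * (-a / (2 * (|b| + 1))) ≤ -a / 2 := by
    rw [mul_div_assoc', div_le_div_iff₀ (by positivity) (by norm_num)]
    nlinarith [abs_nonneg b]
  linarith

/-- If `a*t + b*t^2 ≥ 0` for all small positive `t`, then `a ≥ 0`. -/
lemma tr_aux_pos2 (a b δ : ℝ) (hδ : 0 < δ) (h : ∀ t, 0 < t → t ≤ δ → 0 ≤ a * t + b * t ^ 2) :
    0 ≤ a := by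
  refine tr_aux_pos a b δ hδ (fun t ht0 htδ => ?_)
  have h1 := h t ht0 htδ
  have h2 : 0 ≤ t * (a + b * t) := by nlinarith
  exact nonneg_of_mul_nonneg_right h2 ht0

/-- If `a*t + (err t) ≥ 0` for all small `t` of both signs, with `|err t| ≤ C t²`, then `a = 0`. -/
lemma tr_aux_zero (a C δ : ℝ) (hδ : 0 < δ)
    (h : ∀ t : ℝ, |t| ≤ δ → ∃ e : ℝ, |e| ≤ C * t ^ 2 ∧ 0 ≤ a * t + e) : a = 0 := by
  have hpos : 0 ≤ a := by
    refine tr_aux_pos2 a C δ hδ (fun t ht0 htδ => ?_)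
    obtain ⟨e, he1, he2⟩ := h t (by rw [abs_of_pos ht0]; exact htδ)
    have := le_abs_self e
    linarith
  have hneg : 0 ≤ -a := by
    refine tr_aux_pos2 (-a) C δ hδ (fun t ht0 htδ => ?_)
    obtain ⟨e, he1, he2⟩ := h (-t) (by rw [abs_neg, abs_of_pos ht0]; exact htδ)
    have := le_abs_self e
    have ht2 : (-t) ^ 2 = t ^ 2 := by ring
    rw [ht2] at he1
    nlinarith
  linarith

/-- Crude bound for a quadratic form: `|pᵀHp| ≤ (∑|Hᵢⱼ|) · (pᵀp)`. -/
lemma tr_aux_qbound (N : ℕ) (H : Matrix (Fin N) (Fin N) ℝ) (p : Fin N → ℝ) :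
    |p ⬝ᵥ H *ᵥ p| ≤ (∑ i, ∑ j, |H i j|) * (p ⬝ᵥ p) := by
  have hps : ∀ i j : Fin N, |p i * p j| ≤ p ⬝ᵥ p := by
    intro i j
    have h1 : p i ^ 2 ≤ p ⬝ᵥ p := by
      have := Finset.single_le_sum (f := fun k => p k * p k)
        (fun k _ => mul_self_nonneg (p k)) (Finset.mem_univ i)
      simpa [dotProduct, sq] using this
    have h2 : p j ^ 2 ≤ p ⬝ᵥ p := by
      have := Finset.single_le_sum (f := fun k => p k * p k)
        (fun k _ => mul_self_nonneg (p k)) (Finset.mem_univ j)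
      simpa [dotProduct, sq] using this
    rw [abs_mul]
    nlinarith [abs_nonneg (p i), abs_nonneg (p j), sq_abs (p i), sq_abs (p j),
      sq_nonneg (|p i| - |p j|)]
  have hexp : p ⬝ᵥ H *ᵥ p = ∑ i, ∑ j, p i * (H i j * p j) := by
    simp [dotProduct, mulVec, Finset.mul_sum]
  rw [hexp, Finset.sum_mul]
  refine (Finset.abs_sum_le_sum_abs _ _).trans (Finset.sum_le_sum fun i _ => ?_)
  rw [Finset.sum_mul]
  refine (Finset.abs_sum_le_sum_abs _ _).trans (Finset.sum_le_sum fun j _ => ?_)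
  have : |p i * (H i j * p j)| = |H i j| * |p i * p j| := by
    rw [← abs_mul]; ring_nf
  rw [this]
  exact mul_le_mul_of_nonneg_left (hps i j) (abs_nonneg _)

set_option maxHeartbeats 4000000 in
/-- **Trust region optimality criterion.** A vector `pstar` minimizes the quadratic model
`Q(p) = F₀ + gᵀp + (1/2) pᵀ H p` over the Euclidean ball of radius `Δ` if and only if it is
feasible and there is a Lagrange multiplier `lam ≥ 0` with `(H + lam I) pstar = -g`,
complementary slackness `lam (Δ - ‖pstar‖) = 0`, and `H + lam I` positive semidefinite. -/
theorem trust_region_optimality (N : ℕ) (hN : 1 ≤ N)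
    (H : Matrix (Fin N) (Fin N) ℝ) (hH : H.IsSymm)
    (g : Fin N → ℝ) (F₀ Δ : ℝ) (hΔ : 0 < Δ)
    (Q : (Fin N → ℝ) → ℝ)
    (hQ : ∀ p : Fin N → ℝ, Q p = F₀ + g ⬝ᵥ p + (1 / 2) * (p ⬝ᵥ H.mulVec p))
    (pstar : Fin N → ℝ) :
    (Real.sqrt (∑ i, pstar i ^ 2) ≤ Δ ∧
      ∀ p : Fin N → ℝ, Real.sqrt (∑ i, p i ^ 2) ≤ Δ → Q pstar ≤ Q p) ↔
    (Real.sqrt (∑ i, pstar i ^ 2) ≤ Δ ∧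
      ∃ lam : ℝ, 0 ≤ lam ∧
        (H + lam • (1 : Matrix (Fin N) (Fin N) ℝ)).mulVec pstar = -g ∧
        lam * (Δ - Real.sqrt (∑ i, pstar i ^ 2)) = 0 ∧
        ∀ p : Fin N → ℝ,
          0 ≤ p ⬝ᵥ (H + lam • (1 : Matrix (Fin N) (Fin N) ℝ)).mulVec p) := by
  -- basic dot-product facts
  have hsum : ∀ p : Fin N → ℝ, ∑ i, p i ^ 2 = p ⬝ᵥ p := fun p => by simp [dotProduct, sq]
  have hn2 : ∀ p : Fin N → ℝ, 0 ≤ p ⬝ᵥ p :=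
    fun p => Finset.sum_nonneg fun i _ => mul_self_nonneg _
  have hfeas : ∀ p : Fin N → ℝ, (Real.sqrt (∑ i, p i ^ 2) ≤ Δ ↔ p ⬝ᵥ p ≤ Δ ^ 2) := by
    intro p
    rw [hsum, Real.sqrt_le_iff]
    constructor
    · tauto
    · exact fun h => ⟨hΔ.le, h⟩
  have hsym : ∀ u v : Fin N → ℝ, u ⬝ᵥ H *ᵥ v = v ⬝ᵥ H *ᵥ u := by
    intro u v
    rw [Matrix.dotProduct_mulVec, ← Matrix.mulVec_transpose, hH.eq, dotProduct_comm]
  have hmv : ∀ (lam : ℝ) (v : Fin N → ℝ),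
      (H + lam • (1 : Matrix (Fin N) (Fin N) ℝ)) *ᵥ v = H *ᵥ v + lam • v := by
    intro lam v
    rw [Matrix.add_mulVec, Matrix.smul_mulVec, Matrix.one_mulVec]
  have hds : ∀ (t : ℝ) (v w : Fin N → ℝ), v ⬝ᵥ (t • w) = t * (v ⬝ᵥ w) := by
    intro t v w; rw [dotProduct_smul]; rfl
  have hsd : ∀ (t : ℝ) (v w : Fin N → ℝ), (t • v) ⬝ᵥ w = t * (v ⬝ᵥ w) := by
    intro t v w; rw [smul_dotProduct]; rfl
  -- the fundamental expansion of Q around a point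
  have hexp : ∀ p d : Fin N → ℝ,
      Q (p + d) = Q p + (g + H *ᵥ p) ⬝ᵥ d + (1 / 2) * (d ⬝ᵥ H *ᵥ d) := by
    intro p d
    rw [hQ, hQ]
    simp only [Matrix.mulVec_add, dotProduct_add, add_dotProduct]
    have h1 : d ⬝ᵥ H *ᵥ p = p ⬝ᵥ H *ᵥ d := hsym d p
    have h2 : (H *ᵥ p) ⬝ᵥ d = p ⬝ᵥ H *ᵥ d := by
      rw [dotProduct_comm, hsym d p]
    rw [h1, h2]
    ring
  -- expansion of the squared norm
  have hnexp : ∀ u d : Fin N → ℝ,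
      (u + d) ⬝ᵥ (u + d) = u ⬝ᵥ u + 2 * (u ⬝ᵥ d) + d ⬝ᵥ d := by
    intro u d
    simp only [dotProduct_add, add_dotProduct]
    rw [dotProduct_comm d u]
    ring
  constructor
  · -- hard direction (necessity)
    rintro ⟨hfe, hmin⟩
    refine ⟨hfe, ?_⟩
    have hfe2 : pstar ⬝ᵥ pstar ≤ Δ ^ 2 := (hfeas pstar).1 hfe
    set r : Fin N → ℝ := g + H *ᵥ pstar with hr
    have hkey : ∀ d : Fin N → ℝ, (pstar + d) ⬝ᵥ (pstar + d) ≤ Δ ^ 2 →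
        0 ≤ r ⬝ᵥ d + (1 / 2) * (d ⬝ᵥ H *ᵥ d) := by
      intro d hd
      have h1 := hmin (pstar + d) ((hfeas _).2 hd)
      rw [hexp pstar d] at h1
      linarith
    set K : ℝ := ∑ i, ∑ j, |H i j| with hK
    have hK0 : 0 ≤ K :=
      Finset.sum_nonneg fun i _ => Finset.sum_nonneg fun j _ => abs_nonneg _
    have hKb : ∀ v : Fin N → ℝ, |v ⬝ᵥ H *ᵥ v| ≤ K * (v ⬝ᵥ v) := fun v => tr_aux_qbound N H v
    rcases lt_or_eq_of_le hfe2 with hlt | heqΔ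
    · -- interior case: the multiplier is 0
      have hclaim : ∀ w : Fin N → ℝ, r ⬝ᵥ w = 0 ∧ 0 ≤ w ⬝ᵥ H *ᵥ w := by
        intro w
        set ε : ℝ := Δ ^ 2 - pstar ⬝ᵥ pstar with hε
        have hε0 : 0 < ε := by rw [hε]; linarith
        set C1 : ℝ := 2 * |pstar ⬝ᵥ w| + w ⬝ᵥ w with hC1
        have hC10 : 0 ≤ C1 := add_nonneg (by positivity) (hn2 w)
        set δ : ℝ := min 1 (ε / (C1 + 1)) with hδdef
        have hδ0 : 0 < δ := lt_min one_pos (div_pos hε0 (by linarith))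
        have hδ1 : δ ≤ 1 := min_le_left _ _
        have hδ2 : δ ≤ ε / (C1 + 1) := min_le_right _ _
        have hfeaspt : ∀ t : ℝ, |t| ≤ δ →
            (pstar + t • w) ⬝ᵥ (pstar + t • w) ≤ Δ ^ 2 := by
          intro t ht
          rw [hnexp, hds]
          have e3 : (t • w) ⬝ᵥ (t • w) = t ^ 2 * (w ⬝ᵥ w) := by rw [hds, hsd]; ring
          rw [e3]
          have ht1 : |t| ≤ 1 := le_trans ht hδ1
          have h1 : t * (pstar ⬝ᵥ w) ≤ |t| * |pstar ⬝ᵥ w| := by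
            calc t * (pstar ⬝ᵥ w) ≤ |t * (pstar ⬝ᵥ w)| := le_abs_self _
              _ = |t| * |pstar ⬝ᵥ w| := abs_mul _ _
          have h2 : t ^ 2 * (w ⬝ᵥ w) ≤ |t| * (w ⬝ᵥ w) := by
            have h2a : t ^ 2 ≤ |t| := by nlinarith [sq_abs t, abs_nonneg t]
            exact mul_le_mul_of_nonneg_right h2a (hn2 w)
          have h3 : |t| * (2 * |pstar ⬝ᵥ w| + (w ⬝ᵥ w)) ≤ ε := by
            have h3a : |t| ≤ ε / (C1 + 1) := le_trans ht hδ2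
            have h3b : |t| * C1 ≤ (ε / (C1 + 1)) * C1 :=
              mul_le_mul_of_nonneg_right h3a hC10
            have h3c : (ε / (C1 + 1)) * C1 ≤ ε := by
              rw [div_mul_eq_mul_div, div_le_iff₀ (by linarith)]
              nlinarith
            rw [hC1] at h3b
            linarith
          nlinarith [h1, h2, h3]
        have hq : ∀ t : ℝ, |t| ≤ δ →
            0 ≤ (r ⬝ᵥ w) * t + ((1 / 2) * (w ⬝ᵥ H *ᵥ w)) * t ^ 2 := by
          intro t ht
          have hk := hkey (t • w) (hfeaspt t ht)
          rw [hds] at hk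
          have e3 : (t • w) ⬝ᵥ H *ᵥ (t • w) = t ^ 2 * (w ⬝ᵥ H *ᵥ w) := by
            rw [Matrix.mulVec_smul, hds, hsd]; ring
          rw [e3] at hk
          nlinarith [hk]
        have hrw : r ⬝ᵥ w = 0 := by
          apply tr_aux_zero (r ⬝ᵥ w) |(1 / 2) * (w ⬝ᵥ H *ᵥ w)| δ hδ0
          intro t ht
          refine ⟨((1 / 2) * (w ⬝ᵥ H *ᵥ w)) * t ^ 2, ?_, by linarith [hq t ht]⟩
          rw [abs_mul, abs_of_nonneg (sq_nonneg t)]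
        have hpsdw : 0 ≤ w ⬝ᵥ H *ᵥ w := by
          have hqδ := hq δ (by rw [abs_of_pos hδ0])
          rw [hrw] at hqδ
          nlinarith [hδ0, hqδ, pow_pos hδ0 2]
        exact ⟨hrw, hpsdw⟩
      refine ⟨0, le_refl 0, ?_, by rw [zero_mul], ?_⟩
      · have hr0 : r = 0 := by
          have h := (hclaim r).1
          rwa [dotProduct_self_eq_zero] at h
        have hr0' : g + H *ᵥ pstar = 0 := by rw [← hr]; exact hr0
        rw [hmv, zero_smul, add_zero]
        funext i
        have h := congrFun hr0' i
        simp only [Pi.add_apply, Pi.zero_apply, Pi.neg_apply] at h ⊢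
        linarith
      · intro p
        rw [hmv, zero_smul, add_zero]
        exact (hclaim p).2
    · -- boundary case
      have hΔ2 : (0 : ℝ) < Δ ^ 2 := by positivity
      have hB1 : r ⬝ᵥ pstar ≤ 0 := by
        have h : 0 ≤ -(r ⬝ᵥ pstar) := by
          apply tr_aux_pos2 (-(r ⬝ᵥ pstar)) ((1 / 2) * (pstar ⬝ᵥ H *ᵥ pstar)) 1 one_pos
          intro t ht0 ht1
          have hfeas3 : (pstar + (-t) • pstar) ⬝ᵥ (pstar + (-t) • pstar) ≤ Δ ^ 2 := by
            rw [hnexp, hds]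
            have e3 : ((-t) • pstar) ⬝ᵥ ((-t) • pstar) = t ^ 2 * (pstar ⬝ᵥ pstar) := by
              rw [hds, hsd]; ring
            rw [e3, heqΔ]
            nlinarith [hΔ2.le, mul_nonneg (mul_nonneg ht0.le hΔ2.le) (by linarith : (0:ℝ) ≤ 2 - t)]
          have hk := hkey ((-t) • pstar) hfeas3
          rw [hds] at hk
          have e3 : ((-t) • pstar) ⬝ᵥ H *ᵥ ((-t) • pstar) = t ^ 2 * (pstar ⬝ᵥ H *ᵥ pstar) := by
            rw [Matrix.mulVec_smul, hds, hsd]; ring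
          rw [e3] at hk
          nlinarith [hk]
        linarith
      have hB2 : ∀ w : Fin N → ℝ, pstar ⬝ᵥ w = 0 → r ⬝ᵥ w = 0 := by
        intro w hw
        set c : ℝ := (w ⬝ᵥ w) / Δ ^ 2 with hc
        have hc0 : 0 ≤ c := div_nonneg (hn2 w) hΔ2.le
        have hcΔ : c * Δ ^ 2 = w ⬝ᵥ w := by rw [hc]; field_simp
        set δ : ℝ := 1 / (c + 1) with hδdef
        have hδ0 : 0 < δ := by rw [hδdef]; positivity
        have hδ1 : δ ≤ 1 := by
          rw [hδdef, div_le_one (by linarith)]; linarith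
        set C : ℝ := c * |r ⬝ᵥ pstar| + (1 / 2) * K * (c ^ 2 * Δ ^ 2 + w ⬝ᵥ w) with hCdef
        apply tr_aux_zero (r ⬝ᵥ w) C δ hδ0
        intro t ht
        have ht2 : t ^ 2 ≤ δ ^ 2 := by nlinarith [abs_nonneg t, sq_abs t, hδ0.le]
        have ht2' : t ^ 2 ≤ 1 := by nlinarith [hδ1, hδ0.le]
        have hδc : δ ^ 2 * c ≤ 1 := by
          rw [hδdef, div_pow, one_pow, div_mul_eq_mul_div, div_le_one (by positivity)]
          nlinarith
        have hargle : t ^ 2 * c ≤ 1 := by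
          have := mul_le_mul_of_nonneg_right ht2 hc0
          linarith
        have harg0 : 0 ≤ 1 - t ^ 2 * c := by linarith
        set s : ℝ := Real.sqrt (1 - t ^ 2 * c) with hs
        have hs0 : 0 ≤ s := Real.sqrt_nonneg _
        have hs2 : s ^ 2 = 1 - t ^ 2 * c := Real.sq_sqrt harg0
        have hs1 : s ≤ 1 := by nlinarith [mul_nonneg (sq_nonneg t) hc0]
        have hs1' : 1 - s ≤ c * t ^ 2 := by
          nlinarith [mul_nonneg hs0 (by linarith : (0:ℝ) ≤ 1 - s)]
        set d : Fin N → ℝ := (s - 1) • pstar + t • w with hd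
        have hpd : pstar + d = s • pstar + t • w := by
          rw [hd]; funext i
          simp only [Pi.add_apply, Pi.smul_apply, smul_eq_mul]
          ring
        have hfeas4 : (pstar + d) ⬝ᵥ (pstar + d) ≤ Δ ^ 2 := by
          rw [hpd]
          have e4 : (s • pstar + t • w) ⬝ᵥ (s • pstar + t • w)
              = s ^ 2 * (pstar ⬝ᵥ pstar) + 2 * s * t * (pstar ⬝ᵥ w) + t ^ 2 * (w ⬝ᵥ w) := by
            simp only [dotProduct_add, add_dotProduct, hds, hsd]
            rw [dotProduct_comm w pstar]
            ring
          rw [e4, hw, heqΔ, hs2]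
          have : (1 - t ^ 2 * c) * Δ ^ 2 + 2 * s * t * 0 + t ^ 2 * (w ⬝ᵥ w) = Δ ^ 2 := by
            rw [← hcΔ]; ring
          linarith [this.le]
        have hk := hkey d hfeas4
        have hrd : r ⬝ᵥ d = (s - 1) * (r ⬝ᵥ pstar) + t * (r ⬝ᵥ w) := by
          rw [hd, dotProduct_add, hds, hds]
        have hdd : d ⬝ᵥ d = (s - 1) ^ 2 * (pstar ⬝ᵥ pstar) + t ^ 2 * (w ⬝ᵥ w) := by
          rw [hd]
          simp only [dotProduct_add, add_dotProduct, hds, hsd]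
          rw [dotProduct_comm w pstar, hw]
          ring
        have hddle : d ⬝ᵥ d ≤ t ^ 2 * (c ^ 2 * Δ ^ 2 + w ⬝ᵥ w) := by
          rw [hdd, heqΔ]
          have h1 : (s - 1) ^ 2 ≤ (c * t ^ 2) ^ 2 := by nlinarith [hs1, hs1']
          have h2 := mul_le_mul_of_nonneg_right h1 hΔ2.le
          have h4 : (0:ℝ) ≤ c ^ 2 * t ^ 2 * Δ ^ 2 := by positivity
          have h3 : c ^ 2 * t ^ 2 * t ^ 2 * Δ ^ 2 ≤ c ^ 2 * t ^ 2 * Δ ^ 2 := by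
            nlinarith [ht2', h4]
          nlinarith [h2, h3]
        refine ⟨(s - 1) * (r ⬝ᵥ pstar) + (1 / 2) * (d ⬝ᵥ H *ᵥ d), ?_, ?_⟩
        · have hq1 : |(s - 1) * (r ⬝ᵥ pstar)| ≤ c * t ^ 2 * |r ⬝ᵥ pstar| := by
            rw [abs_mul]
            apply mul_le_mul_of_nonneg_right _ (abs_nonneg _)
            rw [abs_of_nonpos (by linarith : s - 1 ≤ 0)]
            linarith
          have hq2 : |(1 / 2) * (d ⬝ᵥ H *ᵥ d)|
              ≤ (1 / 2) * (K * (t ^ 2 * (c ^ 2 * Δ ^ 2 + w ⬝ᵥ w))) := by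
            rw [abs_mul, abs_of_pos (by norm_num : (0:ℝ) < 1 / 2)]
            have h1 := hKb d
            have h2 : K * (d ⬝ᵥ d) ≤ K * (t ^ 2 * (c ^ 2 * Δ ^ 2 + w ⬝ᵥ w)) :=
              mul_le_mul_of_nonneg_left hddle hK0
            nlinarith [h1, h2]
          calc |(s - 1) * (r ⬝ᵥ pstar) + (1 / 2) * (d ⬝ᵥ H *ᵥ d)|
              ≤ |(s - 1) * (r ⬝ᵥ pstar)| + |(1 / 2) * (d ⬝ᵥ H *ᵥ d)| := abs_add_le _ _
            _ ≤ C * t ^ 2 := by rw [hCdef]; nlinarith [hq1, hq2]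
        · rw [hrd] at hk
          linarith
      set mu : ℝ := (r ⬝ᵥ pstar) / Δ ^ 2 with hmu
      have hmu0 : mu ≤ 0 := div_nonpos_of_nonpos_of_nonneg hB1 hΔ2.le
      have hBall : ∀ w : Fin N → ℝ, r ⬝ᵥ w = mu * (pstar ⬝ᵥ w) := by
        intro w
        have hw' : pstar ⬝ᵥ (w - ((pstar ⬝ᵥ w) / Δ ^ 2) • pstar) = 0 := by
          rw [dotProduct_sub, hds, heqΔ]
          field_simp
          ring
        have h0 := hB2 _ hw'
        rw [dotProduct_sub, hds] at h0
        rw [hmu]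
        have hΔne : (Δ : ℝ) ^ 2 ≠ 0 := hΔ2.ne'
        field_simp at h0 ⊢
        linarith [h0]
      have hrmu : r = mu • pstar := by
        set v : Fin N → ℝ := r - mu • pstar with hv
        have h1 : v ⬝ᵥ v = r ⬝ᵥ v - mu * (pstar ⬝ᵥ v) := by
          rw [hv, sub_dotProduct, hsd]
        have h2 := hBall v
        have h3 : v ⬝ᵥ v = 0 := by rw [h1, h2]; ring
        have h4 : v = 0 := by rwa [dotProduct_self_eq_zero] at h3
        have h5 : r - mu • pstar = 0 := by rw [← hv]; exact h4
        exact sub_eq_zero.1 h5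
      have hM : ∀ w : Fin N → ℝ, 0 ≤ w ⬝ᵥ H *ᵥ w + (-mu) * (w ⬝ᵥ w) := by
        have hMne : ∀ w : Fin N → ℝ, pstar ⬝ᵥ w ≠ 0 →
            0 ≤ w ⬝ᵥ H *ᵥ w + (-mu) * (w ⬝ᵥ w) := by
          intro w hw
          have hww0 : 0 < w ⬝ᵥ w := by
            rcases (hn2 w).lt_or_eq with h | h
            · exact h
            · exfalso
              apply hw
              have hw0 : w = 0 := by rwa [eq_comm, dotProduct_self_eq_zero] at h
              rw [hw0, dotProduct_zero]
          set t : ℝ := -2 * (pstar ⬝ᵥ w) / (w ⬝ᵥ w) with htdef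
          have htne : t ≠ 0 := by
            rw [htdef]
            intro hcon
            apply hw
            rcases div_eq_zero_iff.1 hcon with h | h
            · linarith
            · exact absurd h hww0.ne'
          have htw : t * (w ⬝ᵥ w) = -2 * (pstar ⬝ᵥ w) := by
            rw [htdef]; field_simp
          have hfeas5 : (pstar + t • w) ⬝ᵥ (pstar + t • w) ≤ Δ ^ 2 := by
            rw [hnexp, hds]
            have e3 : (t • w) ⬝ᵥ (t • w) = t * (t * (w ⬝ᵥ w)) := by rw [hds, hsd]
            rw [e3, htw, heqΔ]
            nlinarith []
          have hk := hkey (t • w) hfeas5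
          rw [hds] at hk
          have e3 : (t • w) ⬝ᵥ H *ᵥ (t • w) = t ^ 2 * (w ⬝ᵥ H *ᵥ w) := by
            rw [Matrix.mulVec_smul, hds, hsd]; ring
          rw [e3, hBall w] at hk
          have hid : t * (pstar ⬝ᵥ w) = -(t ^ 2 * (w ⬝ᵥ w)) / 2 := by
            have h := congrArg (fun x => t * x) htw
            nlinarith [h]
          have h5 : t * (mu * (pstar ⬝ᵥ w)) = (1 / 2) * t ^ 2 * ((-mu) * (w ⬝ᵥ w)) := by
            linear_combination mu * hid
          have h6 : 0 ≤ (1 / 2) * t ^ 2 * ((-mu) * (w ⬝ᵥ w))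
              + (1 / 2) * (t ^ 2 * (w ⬝ᵥ H *ᵥ w)) := by linarith [hk, h5]
          have ht2pos : 0 < t ^ 2 :=
            lt_of_le_of_ne (sq_nonneg t) (Ne.symm (pow_ne_zero 2 htne))
          by_contra hcon
          push_neg at hcon
          have h7 : 0 < t ^ 2 * (-(w ⬝ᵥ H *ᵥ w + (-mu) * (w ⬝ᵥ w))) :=
            mul_pos ht2pos (by linarith)
          nlinarith [h6, h7]
        intro w
        rcases eq_or_ne (pstar ⬝ᵥ w) 0 with hw0 | hw0
        · set a : ℝ := w ⬝ᵥ H *ᵥ w + (-mu) * (w ⬝ᵥ w) with ha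
          set b : ℝ := 2 * (w ⬝ᵥ H *ᵥ pstar) + (-mu) * (2 * (w ⬝ᵥ pstar)) with hb
          set cc : ℝ := pstar ⬝ᵥ H *ᵥ pstar + (-mu) * (pstar ⬝ᵥ pstar) with hcc
          have hquad : ∀ e : ℝ, 0 < e → e ≤ 1 → 0 ≤ a + b * e + cc * e ^ 2 := by
            intro e he0 he1
            have hne : pstar ⬝ᵥ (w + e • pstar) ≠ 0 := by
              rw [dotProduct_add, hds, hw0, heqΔ, zero_add]
              exact (mul_pos he0 hΔ2).ne'
            have h1 := hMne (w + e • pstar) hne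
            have e1 : (w + e • pstar) ⬝ᵥ H *ᵥ (w + e • pstar)
                = w ⬝ᵥ H *ᵥ w + 2 * e * (w ⬝ᵥ H *ᵥ pstar)
                  + e ^ 2 * (pstar ⬝ᵥ H *ᵥ pstar) := by
              rw [Matrix.mulVec_add, Matrix.mulVec_smul]
              simp only [dotProduct_add, add_dotProduct, hds, hsd]
              rw [hsym pstar w]
              ring
            have e2 : (w + e • pstar) ⬝ᵥ (w + e • pstar)
                = w ⬝ᵥ w + 2 * e * (w ⬝ᵥ pstar) + e ^ 2 * (pstar ⬝ᵥ pstar) := by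
              simp only [dotProduct_add, add_dotProduct, hds, hsd]
              rw [dotProduct_comm pstar w]
              ring
            rw [e1, e2] at h1
            rw [ha, hb, hcc]
            nlinarith [h1]
          have hfin : 0 ≤ a := by
            apply tr_aux_pos a (|b| + |cc|) 1 one_pos
            intro e he0 he1
            have h1 := hquad e he0 he1
            have h2 : b * e ≤ |b| * e := mul_le_mul_of_nonneg_right (le_abs_self b) he0.le
            have h3 : cc * e ^ 2 ≤ |cc| * e := by
              have h3a : cc * e ^ 2 ≤ |cc| * e ^ 2 :=
                mul_le_mul_of_nonneg_right (le_abs_self cc) (sq_nonneg e)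
              have h3b : |cc| * e ^ 2 ≤ |cc| * e := by
                nlinarith [mul_nonneg (mul_nonneg (abs_nonneg cc) he0.le) (by linarith : (0:ℝ) ≤ 1 - e)]
              linarith
            nlinarith [h1, h2, h3]
          exact hfin
        · exact hMne w hw0
      refine ⟨-mu, by linarith, ?_, ?_, ?_⟩
      · rw [hmv]
        funext i
        have h1 := congrFun hrmu i
        have h2 := congrFun hr i
        simp only [Pi.add_apply, Pi.smul_apply, Pi.neg_apply, smul_eq_mul] at h1 h2 ⊢
        linarith
      · have hsqrt : Real.sqrt (∑ i, pstar i ^ 2) = Δ := by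
          rw [hsum, heqΔ, Real.sqrt_sq hΔ.le]
        rw [hsqrt, sub_self, mul_zero]
      · intro p
        rw [hmv, dotProduct_add, hds]
        exact hM p
  · -- easy direction (sufficiency)
    rintro ⟨hfe, lam, hlam, heq, hcs, hpsd⟩
    refine ⟨hfe, fun p hp => ?_⟩
    rw [hfeas] at hp
    have hfe2 : pstar ⬝ᵥ pstar ≤ Δ ^ 2 := (hfeas pstar).1 hfe
    set d : Fin N → ℝ := p - pstar with hd
    have hpd : p = pstar + d := by rw [hd]; abel
    have e1 : Q p = Q pstar + (g + H *ᵥ pstar) ⬝ᵥ d + (1 / 2) * (d ⬝ᵥ H *ᵥ d) := by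
      rw [hpd] at *; exact hexp pstar d
    -- the multiplier equation gives `g + H pstar = -lam • pstar`
    have heq2 : g + H *ᵥ pstar = -(lam • pstar) := by
      rw [hmv] at heq
      have : H *ᵥ pstar + lam • pstar = -g := heq
      funext i
      have h := congrFun this i
      simp only [Pi.add_apply, Pi.smul_apply, Pi.neg_apply, smul_eq_mul] at h ⊢
      linarith
    have hlin : (g + H *ᵥ pstar) ⬝ᵥ d = -(lam * (pstar ⬝ᵥ d)) := by
      rw [heq2, neg_dotProduct, hsd]
    -- PSD gives a lower bound on the quadratic term
    have hpsd2 : 0 ≤ d ⬝ᵥ H *ᵥ d + lam * (d ⬝ᵥ d) := by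
      have := hpsd d
      rwa [hmv, dotProduct_add, hds] at this
    -- complementary slackness in squared form
    have hcs2 : lam * (Δ ^ 2 - pstar ⬝ᵥ pstar) = 0 := by
      rcases mul_eq_zero.1 hcs with h | h
      · rw [h, zero_mul]
      · have hsq : Real.sqrt (∑ i, pstar i ^ 2) = Δ := by linarith
        have : pstar ⬝ᵥ pstar = Δ ^ 2 := by
          rw [← hsum]
          rw [← hsq, Real.sq_sqrt]
          rw [hsum]; exact hn2 pstar
        rw [this, sub_self, mul_zero]
    have hpp : p ⬝ᵥ p = pstar ⬝ᵥ pstar + 2 * (pstar ⬝ᵥ d) + d ⬝ᵥ d := by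
      rw [hpd]; exact hnexp pstar d
    have hub : 0 ≤ lam * (Δ ^ 2 - p ⬝ᵥ p) := mul_nonneg hlam (by linarith)
    rw [e1, hlin]
    nlinarith [hpsd2, hcs2, hub, hpp]
end

section
/- Well-posedness of the discrete variational step: Let N ≥ 2, τ > 0, m > 0, γ > 1, and let x̂₁, …, x̂_N ∈ ℝ. Define, on the open set Ω := { z ∈ ℝ^N : z_i < z_{i+1} for all 1 ≤ i ≤ N−1 }, the functional F(z) := ∑_{i=1}^N (3/(4τ²)) m (z_i − x̂_i)² + ∑_{i=1}^{N−1} (1/(γ−1)) (m/(z_{i+1} − z_i))^γ (z_{i+1} − z_i). Then F attains its infimum over Ω, and the minimizer is unique. -/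
open Set Real Finset

lemma convexOn_rpow_neg {p : ℝ} (hp : p < 0) :
    ConvexOn ℝ (Ioi (0:ℝ)) (fun x : ℝ => x ^ p) := by
  refine ⟨convex_Ioi 0, fun x hx y hy a b ha hb hab => ?_⟩
  simp only [smul_eq_mul] at *
  have hx0 : (0:ℝ) < x := hx
  have hy0 : (0:ℝ) < y := hy
  have hs : (0:ℝ) < a * x + b * y := by
    have := (convex_Ioi (0:ℝ)) hx hy ha hb hab
    simpa using this
  have hlog : a * Real.log x + b * Real.log y ≤ Real.log (a * x + b * y) := by
    have := strictConcaveOn_log_Ioi.concaveOn.2 hx hy ha hb hab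
    simpa using this
  rw [rpow_def_of_pos hs, rpow_def_of_pos hx0, rpow_def_of_pos hy0]
  calc Real.exp (Real.log (a * x + b * y) * p)
      ≤ Real.exp ((a * Real.log x + b * Real.log y) * p) := by
        apply Real.exp_le_exp.mpr
        nlinarith
    _ = Real.exp (a * (Real.log x * p) + b * (Real.log y * p)) := by ring_nf
    _ ≤ a * Real.exp (Real.log x * p) + b * Real.exp (Real.log y * p) := by
        have := convexOn_exp.2 (mem_univ (Real.log x * p)) (mem_univ (Real.log y * p)) ha hb hab
        simpa using this


lemma omega_convex (N : ℕ) : Convex ℝ {z : Fin N → ℝ | StrictMono z} := by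
  intro z hz w hw a b ha hb hab
  intro i j hij
  have h1 := hz hij
  have h2 := hw hij
  simp only [Pi.add_apply, Pi.smul_apply, smul_eq_mul]
  rcases ha.lt_or_eq with ha' | ha'
  · have := mul_lt_mul_of_pos_left h1 ha'
    nlinarith [mul_le_mul_of_nonneg_left h2.le hb]
  · have hb1 : b = 1 := by linarith
    simp [← ha', hb1, h2]

noncomputable def dvsG (n : ℕ) (Cq ce p : ℝ) (xhat : Fin (n+2) → ℝ) (z : Fin (n+2) → ℝ) : ℝ :=
  Cq * ∑ i, (z i - xhat i)^2 + ∑ i : Fin (n+1), ce * (z i.succ - z i.castSucc) ^ p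

lemma dvsG_strictConvexOn (n : ℕ) (Cq ce p : ℝ) (hCq : 0 < Cq) (hce : 0 < ce) (hp : p < 0)
    (xhat : Fin (n+2) → ℝ) :
    StrictConvexOn ℝ {z : Fin (n+2) → ℝ | StrictMono z} (dvsG n Cq ce p xhat) := by
  have hconv := omega_convex (n+2)
  have hquad : StrictConvexOn ℝ {z : Fin (n+2) → ℝ | StrictMono z}
      (fun z => Cq * ∑ i, (z i - xhat i)^2) := by
    refine ⟨hconv, fun z hz w hw hzw a b ha hb hab => ?_⟩
    simp only [smul_eq_mul, Pi.add_apply, Pi.smul_apply]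
    have hsq := (Even.strictConvexOn_pow (even_two) (two_ne_zero)).convexOn
    have key : ∑ i, (a * z i + b * w i - xhat i)^2 <
        a * ∑ i, (z i - xhat i)^2 + b * ∑ i, (w i - xhat i)^2 := by
      rw [Finset.mul_sum, Finset.mul_sum, ← Finset.sum_add_distrib]
      obtain ⟨i0, hi0⟩ := Function.ne_iff.mp hzw
      refine Finset.sum_lt_sum (fun i _ => ?_) ⟨i0, Finset.mem_univ i0, ?_⟩
      · have := hsq.2 (mem_univ (z i - xhat i)) (mem_univ (w i - xhat i)) ha.le hb.le hab
        simp only [smul_eq_mul] at this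
        calc (a * z i + b * w i - xhat i)^2
            = (a * (z i - xhat i) + b * (w i - xhat i))^2 := by
              congr 1; linear_combination (xhat i) * hab
          _ ≤ a * (z i - xhat i)^2 + b * (w i - xhat i)^2 := this
      · have hne : z i0 - xhat i0 ≠ w i0 - xhat i0 := by
          intro h; exact hi0 (by linarith)
        have := (Even.strictConvexOn_pow (even_two) (two_ne_zero)).2
          (mem_univ (z i0 - xhat i0)) (mem_univ (w i0 - xhat i0)) hne ha hb hab
        simp only [smul_eq_mul] at this
        calc (a * z i0 + b * w i0 - xhat i0)^2
            = (a * (z i0 - xhat i0) + b * (w i0 - xhat i0))^2 := by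
              congr 1; linear_combination (xhat i0) * hab
          _ < a * (z i0 - xhat i0)^2 + b * (w i0 - xhat i0)^2 := this
    calc Cq * ∑ i, (a * z i + b * w i - xhat i)^2
        < Cq * (a * ∑ i, (z i - xhat i)^2 + b * ∑ i, (w i - xhat i)^2) :=
          mul_lt_mul_of_pos_left key hCq
      _ = a * (Cq * ∑ i, (z i - xhat i)^2) + b * (Cq * ∑ i, (w i - xhat i)^2) := by ring
  have hen : ConvexOn ℝ {z : Fin (n+2) → ℝ | StrictMono z}
      (fun z => ∑ i : Fin (n+1), ce * (z i.succ - z i.castSucc) ^ p) := by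
    refine ⟨hconv, fun z hz w hw a b ha hb hab => ?_⟩
    simp only [smul_eq_mul, Pi.add_apply, Pi.smul_apply]
    rw [Finset.mul_sum, Finset.mul_sum, ← Finset.sum_add_distrib]
    refine Finset.sum_le_sum fun i _ => ?_
    have hdz : (0:ℝ) < z i.succ - z i.castSucc := sub_pos.mpr (hz (Fin.castSucc_lt_succ (i := i)))
    have hdw : (0:ℝ) < w i.succ - w i.castSucc := sub_pos.mpr (hw (Fin.castSucc_lt_succ (i := i)))
    have hcv := (convexOn_rpow_neg hp).2 (mem_Ioi.mpr hdz) (mem_Ioi.mpr hdw) ha hb hab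
    simp only [smul_eq_mul] at hcv
    have harg : a * z i.succ + b * w i.succ - (a * z i.castSucc + b * w i.castSucc)
        = a * (z i.succ - z i.castSucc) + b * (w i.succ - w i.castSucc) := by ring
    calc ce * (a * z i.succ + b * w i.succ - (a * z i.castSucc + b * w i.castSucc)) ^ p
        = ce * (a * (z i.succ - z i.castSucc) + b * (w i.succ - w i.castSucc)) ^ p := by
          rw [harg]
      _ ≤ ce * (a * (z i.succ - z i.castSucc) ^ p + b * (w i.succ - w i.castSucc) ^ p) :=
          mul_le_mul_of_nonneg_left hcv hce.le
      _ = a * (ce * (z i.succ - z i.castSucc) ^ p) + b * (ce * (w i.succ - w i.castSucc) ^ p) := by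
          ring
  exact hquad.add_convexOn hen

lemma dvsG_quad_le (n : ℕ) (Cq ce p : ℝ) (hCq : 0 < Cq) (hce : 0 < ce)
    (xhat : Fin (n+2) → ℝ) (z : Fin (n+2) → ℝ) (hz : StrictMono z) (i : Fin (n+2)) :
    Cq * (z i - xhat i)^2 ≤ dvsG n Cq ce p xhat z := by
  have h1 : (z i - xhat i)^2 ≤ ∑ j, (z j - xhat j)^2 :=
    Finset.single_le_sum (f := fun j => (z j - xhat j)^2) (fun j _ => sq_nonneg _)
      (Finset.mem_univ i)
  have h2 : (0:ℝ) ≤ ∑ j : Fin (n+1), ce * (z j.succ - z j.castSucc) ^ p :=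
    Finset.sum_nonneg fun j _ => mul_nonneg hce.le (rpow_nonneg
      (sub_nonneg.mpr (hz (Fin.castSucc_lt_succ (i := j))).le) p)
  have := mul_le_mul_of_nonneg_left h1 hCq.le
  unfold dvsG; linarith

lemma dvsG_en_le (n : ℕ) (Cq ce p : ℝ) (hCq : 0 < Cq) (hce : 0 < ce)
    (xhat : Fin (n+2) → ℝ) (z : Fin (n+2) → ℝ) (hz : StrictMono z) (i : Fin (n+1)) :
    ce * (z i.succ - z i.castSucc) ^ p ≤ dvsG n Cq ce p xhat z := by
  have h1 : ce * (z i.succ - z i.castSucc) ^ p ≤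
      ∑ j : Fin (n+1), ce * (z j.succ - z j.castSucc) ^ p :=
    Finset.single_le_sum (fun j _ => mul_nonneg hce.le (rpow_nonneg
      (sub_nonneg.mpr (hz (Fin.castSucc_lt_succ (i := j))).le) p)) (Finset.mem_univ i)
  have h2 : (0:ℝ) ≤ Cq * ∑ j, (z j - xhat j)^2 :=
    mul_nonneg hCq.le (Finset.sum_nonneg fun j _ => sq_nonneg _)
  unfold dvsG; linarith

lemma dvsG_nonneg (n : ℕ) (Cq ce p : ℝ) (hCq : 0 < Cq) (hce : 0 < ce)
    (xhat : Fin (n+2) → ℝ) (z : Fin (n+2) → ℝ) (hz : StrictMono z) :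
    0 ≤ dvsG n Cq ce p xhat z := by
  have := dvsG_quad_le n Cq ce p hCq hce xhat z hz 0
  nlinarith [sq_nonneg (z 0 - xhat 0)]

lemma dvsG_exists_min (n : ℕ) (Cq ce p : ℝ) (hCq : 0 < Cq) (hce : 0 < ce) (hp : p < 0)
    (xhat : Fin (n+2) → ℝ) :
    ∃ z : Fin (n+2) → ℝ, StrictMono z ∧
      ∀ w : Fin (n+2) → ℝ, StrictMono w → dvsG n Cq ce p xhat z ≤ dvsG n Cq ce p xhat w := by
  -- reference configuration
  set z0 : Fin (n+2) → ℝ := fun i => (i : ℕ) with hz0def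
  have hz0 : StrictMono z0 := by
    rw [Fin.strictMono_iff_lt_succ]
    intro i
    simp [hz0def, Fin.coe_castSucc, Fin.val_succ]
  set c0 : ℝ := dvsG n Cq ce p xhat z0 with hc0def
  have hc0 : 0 ≤ c0 := dvsG_nonneg n Cq ce p hCq hce xhat z0 hz0
  -- choice of ε
  set q : ℝ := -p with hqdef
  have hq : 0 < q := by simp [hqdef]; linarith
  set X : ℝ := (ce / (c0+1)) ^ q⁻¹ with hXdef
  have hXpos : 0 < X := rpow_pos_of_pos (div_pos hce (by linarith)) _
  set ε : ℝ := min 1 X with hεdef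
  have hε : 0 < ε := lt_min one_pos hXpos
  have hεkey : c0 + 1 ≤ ce * ε ^ p := by
    have h1 : ε ^ q ≤ X ^ q := rpow_le_rpow hε.le (min_le_right _ _) hq.le
    have h2 : X ^ q = ce / (c0+1) := by
      rw [hXdef]
      exact Real.rpow_inv_rpow (le_of_lt (div_pos hce (by linarith))) hq.ne'
    have h3 : (0:ℝ) < ε ^ q := rpow_pos_of_pos hε _
    have h4 : ε ^ p = (ε ^ q)⁻¹ := by
      rw [hqdef, ← Real.rpow_neg hε.le, neg_neg]
    have h5 : (ce / (c0+1))⁻¹ ≤ (ε ^ q)⁻¹ := by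
      apply inv_anti₀ h3 (h1.trans h2.le)
    rw [h4]
    have h6 : (ce / (c0+1))⁻¹ = (c0+1)/ce := by
      field_simp
    rw [h6] at h5
    calc c0 + 1 = ce * ((c0+1)/ce) := by field_simp
      _ ≤ ce * (ε ^ q)⁻¹ := mul_le_mul_of_nonneg_left h5 hce.le
  -- choice of B
  set B : ℝ := Real.sqrt ((c0+1)/Cq) with hBdef
  have hBnn : 0 ≤ B := Real.sqrt_nonneg _
  have hBsq : Cq * B^2 = c0 + 1 := by
    rw [hBdef, Real.sq_sqrt (by positivity)]
    field_simp
  -- the compact set K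
  set K : Set (Fin (n+2) → ℝ) :=
    {z | (∀ i, |z i - xhat i| ≤ B) ∧ ∀ i : Fin (n+1), ε ≤ z i.succ - z i.castSucc} with hKdef
  have hKΩ : ∀ z ∈ K, StrictMono z := by
    intro z hzK
    rw [Fin.strictMono_iff_lt_succ]
    intro i
    have := hzK.2 i
    linarith
  have hKclosed : IsClosed K := by
    have : K = (⋂ i, {z : Fin (n+2) → ℝ | |z i - xhat i| ≤ B}) ∩
        ⋂ i : Fin (n+1), {z : Fin (n+2) → ℝ | ε ≤ z i.succ - z i.castSucc} := by
      ext z; simp [hKdef, Set.mem_iInter, forall_and]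
    rw [this]
    refine IsClosed.inter (isClosed_iInter fun i => ?_) (isClosed_iInter fun i => ?_)
    · exact isClosed_le (((continuous_apply i).sub continuous_const).abs) continuous_const
    · exact isClosed_le continuous_const ((continuous_apply i.succ).sub (continuous_apply i.castSucc))
  have hKbdd : Bornology.IsBounded K := by
    apply (Metric.isBounded_closedBall (x := xhat) (r := B)).subset
    intro z hzK
    rw [Metric.mem_closedBall]
    rw [dist_pi_le_iff hBnn]
    intro i
    rw [Real.dist_eq]
    exact hzK.1 i
  have hKcompact : IsCompact K := Metric.isCompact_of_isClosed_isBounded hKclosed hKbdd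
  have hz0K : z0 ∈ K := by
    constructor
    · intro i
      have h1 : Cq * (z0 i - xhat i)^2 ≤ c0 := dvsG_quad_le n Cq ce p hCq hce xhat z0 hz0 i
      have h2 : (z0 i - xhat i)^2 ≤ B^2 := by
        rw [hBdef, Real.sq_sqrt (by positivity)]
        rw [le_div_iff₀ hCq]
        linarith
      have := Real.sqrt_le_sqrt h2
      rwa [Real.sqrt_sq_eq_abs, Real.sqrt_sq hBnn] at this
    · intro i
      have : z0 i.succ - z0 i.castSucc = 1 := by
        simp [hz0def, Fin.coe_castSucc, Fin.val_succ]
      rw [this]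
      exact min_le_left _ _
  -- continuity
  have hcont : ContinuousOn (dvsG n Cq ce p xhat) K := by
    apply ContinuousOn.add
    · apply Continuous.continuousOn
      exact continuous_const.mul (continuous_finset_sum _ fun i _ =>
        ((continuous_apply i).sub continuous_const).pow 2)
    · apply continuousOn_finset_sum
      intro i _
      apply ContinuousOn.mul continuousOn_const
      apply ContinuousOn.rpow_const
      · exact ((continuous_apply i.succ).sub (continuous_apply i.castSucc)).continuousOn
      · intro z hzK
        left
        have := hzK.2 i
        intro h; rw [h] at this; linarith
  obtain ⟨z, hzK, hzmin⟩ := hKcompact.exists_isMinOn ⟨z0, hz0K⟩ hcont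
  refine ⟨z, hKΩ z hzK, fun w hw => ?_⟩
  by_cases hwK : w ∈ K
  · exact hzmin hwK
  · have hzc0 : dvsG n Cq ce p xhat z ≤ c0 := hzmin hz0K
    have : (∃ i, B < |w i - xhat i|) ∨ ∃ i : Fin (n+1), w i.succ - w i.castSucc < ε := by
      by_contra hcon
      push_neg at hcon
      exact hwK ⟨hcon.1, hcon.2⟩
    have hgt : c0 + 1 ≤ dvsG n Cq ce p xhat w := by
      rcases this with ⟨i, hi⟩ | ⟨i, hi⟩
      · have h1 : B^2 < (w i - xhat i)^2 := by
          have h := pow_lt_pow_left₀ hi hBnn two_ne_zero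
          rwa [sq_abs] at h
        calc c0 + 1 = Cq * B^2 := hBsq.symm
          _ ≤ Cq * (w i - xhat i)^2 := mul_le_mul_of_nonneg_left h1.le hCq.le
          _ ≤ _ := dvsG_quad_le n Cq ce p hCq hce xhat w hw i
      · have hd : 0 < w i.succ - w i.castSucc := sub_pos.mpr (hw (Fin.castSucc_lt_succ (i := i)))
        have h1 : ε ^ p ≤ (w i.succ - w i.castSucc) ^ p :=
          rpow_le_rpow_of_nonpos hd hi.le hp.le
        calc c0 + 1 ≤ ce * ε ^ p := hεkey
          _ ≤ ce * (w i.succ - w i.castSucc) ^ p := mul_le_mul_of_nonneg_left h1 hce.le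
          _ ≤ _ := dvsG_en_le n Cq ce p hCq hce xhat w hw i
    linarith

/-- **Well-posedness of the discrete variational step.** For `N = n + 2 ≥ 2` particles, the
fully discrete energy
`F(z) = ∑ᵢ (3/(4τ²)) m (zᵢ - x̂ᵢ)² + ∑ᵢ (1/(γ-1)) (m/(zᵢ₊₁ - zᵢ))^γ (zᵢ₊₁ - zᵢ)`
attains its infimum over the open set of strictly increasing configurations, and the
minimizer is unique. -/
theorem discrete_variational_step_wellposed (n : ℕ) (τ m γ : ℝ)
    (hτ : 0 < τ) (hm : 0 < m) (hγ : 1 < γ) (xhat : Fin (n + 2) → ℝ) :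
    ∃! z : Fin (n + 2) → ℝ, StrictMono z ∧
      ∀ w : Fin (n + 2) → ℝ, StrictMono w →
        (∑ i, (3 / (4 * τ ^ 2)) * m * (z i - xhat i) ^ 2 +
            ∑ i : Fin (n + 1),
              (1 / (γ - 1)) * (m / (z i.succ - z i.castSucc)) ^ γ *
                (z i.succ - z i.castSucc)) ≤
          (∑ i, (3 / (4 * τ ^ 2)) * m * (w i - xhat i) ^ 2 +
            ∑ i : Fin (n + 1),
              (1 / (γ - 1)) * (m / (w i.succ - w i.castSucc)) ^ γ *
                (w i.succ - w i.castSucc)) := by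
  set Cq : ℝ := 3 / (4 * τ ^ 2) * m with hCqdef
  have hCq : 0 < Cq := by positivity
  set ce : ℝ := m ^ γ / (γ - 1) with hcedef
  have hce : 0 < ce := div_pos (rpow_pos_of_pos hm γ) (by linarith)
  have hp : 1 - γ < 0 := by linarith
  -- the original functional agrees with `dvsG` on strictly monotone configurations
  have heq : ∀ z : Fin (n + 2) → ℝ, StrictMono z →
      (∑ i, (3 / (4 * τ ^ 2)) * m * (z i - xhat i) ^ 2 +
        ∑ i : Fin (n + 1),
          (1 / (γ - 1)) * (m / (z i.succ - z i.castSucc)) ^ γ *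
            (z i.succ - z i.castSucc)) = dvsG n Cq ce (1 - γ) xhat z := by
    intro z hz
    unfold dvsG
    congr 1
    · rw [Finset.mul_sum]
    · refine Finset.sum_congr rfl fun i _ => ?_
      have hd : 0 < z i.succ - z i.castSucc := sub_pos.mpr (hz (Fin.castSucc_lt_succ (i := i)))
      rw [div_rpow hm.le hd.le, Real.rpow_sub hd, Real.rpow_one, hcedef]
      ring
  obtain ⟨z, hzΩ, hzmin⟩ := dvsG_exists_min n Cq ce (1 - γ) hCq hce hp xhat
  refine ⟨z, ⟨hzΩ, fun w hw => ?_⟩, ?_⟩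
  · rw [heq z hzΩ, heq w hw]
    exact hzmin w hw
  · rintro y ⟨hyΩ, hymin⟩
    refine (dvsG_strictConvexOn n Cq ce (1 - γ) hCq hce hp xhat).eq_of_isMinOn
      (isMinOn_iff.mpr fun w hw => ?_) (isMinOn_iff.mpr fun w hw => hzmin w hw) hyΩ hzΩ
    rw [← heq y hyΩ, ← heq w hw]
    exact hymin w hw
end
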